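/- Let p be any prime and λ = (λ₁ > λ₂ > … > λ_k ≥ 1) a partition with multiplicities ρ₁, …, ρ_k ≥ 1, A_λ = ⊕_{i=1}^{k} (ℤ/p^{λ_i}ℤ)^{ρ_i}, and G_λ = Aut(A_λ). If λ_i − λ_{i+1} ≥ 2 for some 1 ≤ i ≤ k−1, or if λ_k ≥ 2, then H¹(G_λ, A_λ) ≠ 0 for the trivial action of G_λ on A_λ. -/

import Mathlib

/-- The finite abelian `p`-group `A_λ = ⊕_{i=1}^{k} (ℤ/p^{λ_i}ℤ)^{ρ_i}` associated to a
partition `λ` with multiplicities `ρ`. -/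
abbrev abelianPGroupOfPartition (p k : ℕ) (lam rho : Fin k → ℕ) : Type :=
  (i : Fin k) → Fin (rho i) → ZMod (p ^ lam i)


namespace StmtAux

/-- The embedding `ZMod (p^2) →+ ZMod (p^e)` sending `1` to `p^(e-2)`. -/
noncomputable def nu (p e : ℕ) : ZMod (p^2) →+ ZMod (p^e) :=
  ZMod.lift (p^2) ⟨(AddMonoidHom.mulRight ((p : ZMod (p^e))^(e-2))).comp
      (Int.castAddHom (ZMod (p^e))), by
    have : ((p : ZMod (p^e)))^2 * (p : ZMod (p^e))^(e-2) = 0 := by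
      rw [← pow_add, ← Nat.cast_pow, ZMod.natCast_eq_zero_iff]
      exact pow_dvd_pow p (by omega)
    simpa using this⟩

@[simp] lemma nu_natCast (p e m : ℕ) :
    nu p e (m : ZMod (p^2)) = (m : ZMod (p^e)) * (p : ZMod (p^e))^(e-2) := by
  have := ZMod.lift_coe (p^2) ⟨(AddMonoidHom.mulRight ((p : ZMod (p^e))^(e-2))).comp
      (Int.castAddHom (ZMod (p^e))), by
    have : ((p : ZMod (p^e)))^2 * (p : ZMod (p^e))^(e-2) = 0 := by
      rw [← pow_add, ← Nat.cast_pow, ZMod.natCast_eq_zero_iff]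
      exact pow_dvd_pow p (by omega)
    simpa using this⟩ (m : ℤ)
  simpa [nu] using this

lemma nu_injective (p e : ℕ) (hp : p.Prime) (he : 2 ≤ e) : Function.Injective (nu p e) := by
  haveI : NeZero (p^2) := ⟨pow_ne_zero _ hp.ne_zero⟩
  intro a b hab
  rw [← sub_eq_zero] at hab ⊢
  rw [← map_sub] at hab
  set x := a - b with hx
  rw [← ZMod.natCast_zmod_val x] at hab ⊢
  rw [nu_natCast, ← Nat.cast_pow, ← Nat.cast_mul, ZMod.natCast_eq_zero_iff] at hab
  have h2 : p^2 ∣ x.val := by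
    have : p^(e-2) * p^2 ∣ p^(e-2) * x.val := by
      rw [← pow_add]
      calc p^(e-2+2) = p^e := by rw [Nat.sub_add_cancel he]
      _ ∣ x.val * p^(e-2) := hab
      _ = p^(e-2) * x.val := Nat.mul_comm _ _
    exact (mul_dvd_mul_iff_left (pow_ne_zero _ hp.ne_zero)).mp this
  rw [ZMod.natCast_eq_zero_iff]
  exact h2

end StmtAux

namespace StmtAux

lemma nu_smul_natCast (p e m : ℕ) (x : ZMod (p^2)) :
    nu p e ((m : ZMod (p^2)) * x) = (m : ZMod (p^e)) * nu p e x := by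
  rw [← nsmul_eq_mul, ← nsmul_eq_mul, map_nsmul]

lemma nu_torsion (p e : ℕ) (x : ZMod (p^2)) : p^2 • nu p e x = 0 := by
  rw [← map_nsmul]
  have : (p^2) • x = 0 := by
    rw [nsmul_eq_mul, ZMod.natCast_self, zero_mul]
  rw [this, map_zero]

lemma nu_mem_pc (p e c : ℕ) (hp : p ≠ 0) (hce : c + 2 ≤ e) (x : ZMod (p^2)) :
    ∃ y, nu p e x = p^c • y := by
  haveI : NeZero (p^2) := ⟨pow_ne_zero _ hp⟩
  obtain ⟨d, hd⟩ : ∃ d, e - 2 = c + d := ⟨e-2-c, by omega⟩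
  refine ⟨(x.val : ZMod (p^e)) * (p : ZMod (p^e))^d, ?_⟩
  have h1 : nu p e x = (x.val : ZMod (p^e)) * (p : ZMod (p^e))^(e-2) := by
    conv_lhs => rw [← ZMod.natCast_zmod_val x]
    rw [nu_natCast]
  rw [h1, hd, nsmul_eq_mul, pow_add]
  push_cast
  ring

end StmtAux

namespace StmtAux

lemma mem_nu_range (p e c : ℕ) (hp : p ≠ 0) (hce : c + 2 ≤ e) (x : ZMod (p^e))
    (h1 : p^2 • x = 0) (h2 : ∃ y, x = p^c • y) : ∃ m, x = nu p e m := by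
  haveI : NeZero (p^e) := ⟨pow_ne_zero _ hp⟩
  obtain ⟨y, rfl⟩ := h2
  have hy : ((p^(c+2) * y.val : ℕ) : ZMod (p^e)) = 0 := by
    push_cast
    have : ((p:ZMod (p^e))^(c+2) * y.val : ZMod (p^e)) = p^2 • (p^c • y) := by
      rw [nsmul_eq_mul, nsmul_eq_mul, ZMod.natCast_zmod_val]
      push_cast
      ring
    rw [this, h1]
  rw [ZMod.natCast_eq_zero_iff] at hy
  have hdvd : p^(e-c-2) ∣ y.val := by
    have h3 : p^(c+2) * p^(e-c-2) ∣ p^(c+2) * y.val := by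
      rw [← pow_add, show c+2+(e-c-2) = e by omega]
      exact hy
    exact (mul_dvd_mul_iff_left (pow_ne_zero _ hp)).mp h3
  obtain ⟨m, hm⟩ := hdvd
  refine ⟨(m : ZMod (p^2)), ?_⟩
  have hyy : y = ((p^(e-c-2) * m : ℕ) : ZMod (p^e)) := by
    rw [← hm, ZMod.natCast_zmod_val]
  rw [hyy, nu_natCast, nsmul_eq_mul]
  push_cast
  rw [show e - 2 = c + (e-c-2) by omega, pow_add]
  ring

lemma eq_zero_of_pc (p e c : ℕ) (hec : e ≤ c) (x : ZMod (p^e))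
    (h2 : ∃ y, x = p^c • y) : x = 0 := by
  obtain ⟨y, rfl⟩ := h2
  rw [nsmul_eq_mul, show ((p^c : ℕ) : ZMod (p^e)) = 0 from ?_, zero_mul]
  rw [ZMod.natCast_eq_zero_iff]
  exact pow_dvd_pow p hec

end StmtAux

namespace StmtAux

variable (p k : ℕ) (lam rho : Fin k → ℕ) (c : ℕ)

abbrev Idx : Type := {x : Σ j : Fin k, Fin (rho j) // c + 2 ≤ lam x.1}

abbrev Wd : Type := Idx k lam rho c → ZMod (p^2)

noncomputable def iota : Wd p k lam rho c →+ abelianPGroupOfPartition p k lam rho where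
  toFun w := fun j t => if h : c + 2 ≤ lam j then nu p (lam j) (w ⟨⟨j,t⟩,h⟩) else 0
  map_zero' := by
    funext j t
    by_cases h : c + 2 ≤ lam j <;> simp [h]
  map_add' a b := by
    funext j t
    by_cases h : c + 2 ≤ lam j <;> simp [h]

lemma iota_apply (w : Wd p k lam rho c) (j : Fin k) (t : Fin (rho j)) :
    iota p k lam rho c w j t =
      if h : c + 2 ≤ lam j then nu p (lam j) (w ⟨⟨j,t⟩,h⟩) else 0 := rfl

lemma iota_injective (hp : p.Prime) : Function.Injective (iota p k lam rho c) := by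
  intro w w' h
  funext x
  obtain ⟨⟨j, t⟩, hx⟩ := x
  have hx : c + 2 ≤ lam j := hx
  have := congrFun (congrFun h j) t
  rw [iota_apply, iota_apply, dif_pos hx, dif_pos hx] at this
  exact nu_injective p (lam j) hp (by omega) this

lemma iota_torsion (w : Wd p k lam rho c) : p^2 • iota p k lam rho c w = 0 := by
  funext j t
  rw [Pi.smul_apply, Pi.smul_apply, iota_apply]
  by_cases h : c + 2 ≤ lam j
  · rw [dif_pos h]; exact nu_torsion p (lam j) _
  · rw [dif_neg h]; simp

lemma iota_pc (hp : p ≠ 0) (w : Wd p k lam rho c) :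
    ∃ y, iota p k lam rho c w = p^c • y := by
  refine ⟨fun j t => if h : c + 2 ≤ lam j then
    Classical.choose (nu_mem_pc p (lam j) c hp h (w ⟨⟨j,t⟩,h⟩)) else 0, ?_⟩
  funext j t
  rw [Pi.smul_apply, Pi.smul_apply, iota_apply]
  by_cases h : c + 2 ≤ lam j
  · rw [dif_pos h, dif_pos h]
    exact Classical.choose_spec (nu_mem_pc p (lam j) c hp h (w ⟨⟨j,t⟩,h⟩))
  · rw [dif_neg h, dif_neg h]; simp

lemma mem_iota_range (hp : p.Prime) (hsplit : ∀ j, lam j ≤ c ∨ c + 2 ≤ lam j)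
    (x : abelianPGroupOfPartition p k lam rho)
    (h1 : p^2 • x = 0) (h2 : ∃ y, x = p^c • y) :
    ∃ w, x = iota p k lam rho c w := by
  have h1' : ∀ (j : Fin k) (t : Fin (rho j)), p^2 • x j t = 0 := by
    intro j t
    have := congrFun (congrFun h1 j) t
    simpa using this
  have h2' : ∀ (j : Fin k) (t : Fin (rho j)), ∃ y, x j t = p^c • y := by
    obtain ⟨y, rfl⟩ := h2
    exact fun j t => ⟨y j t, by simp⟩
  refine ⟨fun z => Classical.choose (mem_nu_range p (lam z.1.1) c hp.ne_zero z.2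
      (x z.1.1 z.1.2) (h1' _ _) (h2' _ _)), ?_⟩
  funext j t
  rw [iota_apply]
  by_cases h : c + 2 ≤ lam j
  · rw [dif_pos h]
    exact Classical.choose_spec (mem_nu_range p (lam j) c hp.ne_zero h
      (x j t) (h1' _ _) (h2' _ _))
  · rw [dif_neg h]
    exact eq_zero_of_pc p (lam j) c (by rcases hsplit j with h'|h' <;> omega) _ (h2' j t)

end StmtAux

namespace StmtAux

variable {p k : ℕ} {lam rho : Fin k → ℕ} {c : ℕ}

noncomputable def PhiFun (hp : p.Prime) (hsplit : ∀ j, lam j ≤ c ∨ c + 2 ≤ lam j)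
    (g : AddAut (abelianPGroupOfPartition p k lam rho)) :
    Wd p k lam rho c → Wd p k lam rho c := fun w =>
  Classical.choose (mem_iota_range p k lam rho c hp hsplit (g (iota p k lam rho c w))
    (by rw [← map_nsmul, iota_torsion, map_zero])
    (by obtain ⟨y, hy⟩ := iota_pc p k lam rho c hp.ne_zero w
        exact ⟨g y, by rw [hy, map_nsmul]⟩))

lemma PhiFun_spec (hp : p.Prime) (hsplit : ∀ j, lam j ≤ c ∨ c + 2 ≤ lam j)
    (g : AddAut (abelianPGroupOfPartition p k lam rho)) (w : Wd p k lam rho c) :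
    iota p k lam rho c (PhiFun hp hsplit g w) = g (iota p k lam rho c w) :=
  (Classical.choose_spec (mem_iota_range p k lam rho c hp hsplit (g (iota p k lam rho c w))
    (by rw [← map_nsmul, iota_torsion, map_zero])
    (by obtain ⟨y, hy⟩ := iota_pc p k lam rho c hp.ne_zero w
        exact ⟨g y, by rw [hy, map_nsmul]⟩))).symm

noncomputable def Phi (hp : p.Prime) (hsplit : ∀ j, lam j ≤ c ∨ c + 2 ≤ lam j) :
    Multiplicative (AddAut (abelianPGroupOfPartition p k lam rho)) →*
      Module.End (ZMod (p^2)) (Wd p k lam rho c) where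
  toFun g := AddMonoidHom.toZModLinearMap (p^2) (AddMonoidHom.mk' (PhiFun hp hsplit (Multiplicative.toAdd g))
    (fun w w' => by
      apply iota_injective p k lam rho c hp
      rw [map_add, PhiFun_spec, PhiFun_spec, PhiFun_spec, map_add, map_add]))
  map_one' := by
    apply LinearMap.ext
    intro w
    apply iota_injective p k lam rho c hp
    show iota p k lam rho c (PhiFun hp hsplit (Multiplicative.toAdd (1 : Multiplicative (AddAut (abelianPGroupOfPartition p k lam rho)))) w) = iota p k lam rho c w
    rw [PhiFun_spec]
    rfl
  map_mul' g h := by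
    apply LinearMap.ext
    intro w
    apply iota_injective p k lam rho c hp
    show iota p k lam rho c (PhiFun hp hsplit (Multiplicative.toAdd (g * h)) w)
      = iota p k lam rho c (PhiFun hp hsplit (Multiplicative.toAdd g)
        (PhiFun hp hsplit (Multiplicative.toAdd h) w))
    rw [PhiFun_spec, PhiFun_spec, PhiFun_spec]
    rfl

end StmtAux

namespace StmtAux

variable {p k : ℕ} {lam rho : Fin k → ℕ} {c : ℕ}

noncomputable def chi (hp : p.Prime) (hsplit : ∀ j, lam j ≤ c ∨ c + 2 ≤ lam j) :
    Multiplicative (AddAut (abelianPGroupOfPartition p k lam rho)) →* ZMod (p^2) :=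
  LinearMap.det.comp (Phi hp hsplit)

lemma chi_isUnit (hp : p.Prime) (hsplit : ∀ j, lam j ≤ c ∨ c + 2 ≤ lam j)
    (g : Multiplicative (AddAut (abelianPGroupOfPartition p k lam rho))) :
    IsUnit (chi (c := c) hp hsplit g) := by
  refine IsUnit.of_mul_eq_one (chi (c := c) hp hsplit g⁻¹) ?_
  rw [← map_mul, mul_inv_cancel, map_one]

lemma cast_pow_sub_one (hp : p.Prime) (u : ZMod (p^2)) (hu : IsUnit u) :
    (ZMod.castHom (dvd_pow_self p two_ne_zero) (ZMod p)) (u^(p-1) - 1) = 0 := by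
  haveI : Fact p.Prime := ⟨hp⟩
  have h1 : (ZMod.castHom (dvd_pow_self p two_ne_zero) (ZMod p)) u ≠ 0 :=
    (hu.map _).ne_zero
  rw [map_sub, map_pow, map_one, ZMod.pow_card_sub_one_eq_one h1, sub_self]

lemma mul_eq_zero_of_cast_eq_zero (hp : p.Prime) (x y : ZMod (p^2))
    (hx : (ZMod.castHom (dvd_pow_self p two_ne_zero) (ZMod p)) x = 0)
    (hy : (ZMod.castHom (dvd_pow_self p two_ne_zero) (ZMod p)) y = 0) : x * y = 0 := by
  haveI : NeZero (p^2) := ⟨pow_ne_zero _ hp.ne_zero⟩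
  have hx' : ((x.val : ℕ) : ZMod p) = 0 := by
    rw [← map_natCast (ZMod.castHom (dvd_pow_self p two_ne_zero) (ZMod p)) x.val,
      ZMod.natCast_zmod_val, hx]
  have hy' : ((y.val : ℕ) : ZMod p) = 0 := by
    rw [← map_natCast (ZMod.castHom (dvd_pow_self p two_ne_zero) (ZMod p)) y.val,
      ZMod.natCast_zmod_val, hy]
  rw [ZMod.natCast_eq_zero_iff] at hx' hy'
  obtain ⟨a, ha⟩ := hx'
  obtain ⟨b, hb⟩ := hy'
  have : x * y = ((x.val * y.val : ℕ) : ZMod (p^2)) := by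
    push_cast
    rw [ZMod.natCast_zmod_val, ZMod.natCast_zmod_val]
  rw [this, ha, hb, show p * a * (p * b) = p^2 * (a * b) by ring, Nat.cast_mul,
    ZMod.natCast_self, zero_mul]

end StmtAux

namespace StmtAux

variable {p k : ℕ} {lam rho : Fin k → ℕ} {c : ℕ}

noncomputable def scalAut (p : ℕ) (lam rho : Fin k → ℕ) (i₀ : Fin k) (t₀ : Fin (rho i₀)) :
    AddAut (abelianPGroupOfPartition p k lam rho) :=
  AddEquiv.piCongrRight (fun j => AddEquiv.piCongrRight (fun t =>
    if (j = i₀ ∧ (t : ℕ) = (t₀ : ℕ)) then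
      Multiplicative.toAdd (AddAut.mulLeft (ZMod.unitOfCoprime (p+1)
        ((by simp [Nat.coprime_self_add_left] : Nat.Coprime (p+1) p).pow_right (lam j))))
    else AddEquiv.refl (ZMod (p ^ lam j))))

lemma scalAut_apply (p : ℕ) (lam rho : Fin k → ℕ) (i₀ : Fin k) (t₀ : Fin (rho i₀))
    (x : abelianPGroupOfPartition p k lam rho) (j : Fin k) (t : Fin (rho j)) :
    scalAut p lam rho i₀ t₀ x j t =
      if (j = i₀ ∧ (t : ℕ) = (t₀ : ℕ)) then ((p+1 : ℕ) : ZMod (p ^ lam j)) * x j t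
      else x j t := by
  show (if (j = i₀ ∧ (t : ℕ) = (t₀ : ℕ)) then
      Multiplicative.toAdd (AddAut.mulLeft (ZMod.unitOfCoprime (p+1)
        ((by simp [Nat.coprime_self_add_left] : Nat.Coprime (p+1) p).pow_right (lam j))))
    else AddEquiv.refl (ZMod (p ^ lam j))) (x j t) = _
  split
  · show (((ZMod.unitOfCoprime (p+1) _ : (ZMod (p ^ lam j))ˣ)) : ZMod (p ^ lam j)) * x j t = _
    rw [ZMod.coe_unitOfCoprime]
  · rfl

end StmtAux

namespace StmtAux

variable {p k : ℕ} {lam rho : Fin k → ℕ} {c : ℕ}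

lemma idx_eq_iff (i₀ : Fin k) (t₀ : Fin (rho i₀)) (hi₀ : c + 2 ≤ lam i₀)
    (j : Fin k) (t : Fin (rho j)) (h : c + 2 ≤ lam j) :
    (⟨⟨j, t⟩, h⟩ : Idx k lam rho c) = ⟨⟨i₀, t₀⟩, hi₀⟩ ↔ (j = i₀ ∧ (t : ℕ) = (t₀ : ℕ)) := by
  rw [Subtype.ext_iff]
  constructor
  · intro hh
    obtain ⟨h1, h2⟩ := Sigma.mk.inj_iff.mp hh
    subst h1
    exact ⟨rfl, by rw [eq_of_heq h2]⟩
  · rintro ⟨rfl, h2⟩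
    exact congrArg (Sigma.mk j) (Fin.ext h2)

noncomputable def Ediag (p : ℕ) (lam rho : Fin k → ℕ) (c : ℕ) (z : Idx k lam rho c) :
    Module.End (ZMod (p^2)) (Wd p k lam rho c) :=
  AddMonoidHom.toZModLinearMap (p^2) (AddMonoidHom.mk'
    (fun w x => (if x = z then ((p+1 : ℕ) : ZMod (p^2)) else 1) * w x)
    (fun w w' => by funext x; simp [mul_add]))

lemma Phi_scalAut (hp : p.Prime) (hsplit : ∀ j, lam j ≤ c ∨ c + 2 ≤ lam j)
    (i₀ : Fin k) (t₀ : Fin (rho i₀)) (hi₀ : c + 2 ≤ lam i₀) :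
    Phi (c := c) hp hsplit (Multiplicative.ofAdd (scalAut p lam rho i₀ t₀)) = Ediag p lam rho c ⟨⟨i₀, t₀⟩, hi₀⟩ := by
  apply LinearMap.ext
  intro w
  apply iota_injective p k lam rho c hp
  show iota p k lam rho c (PhiFun hp hsplit (scalAut p lam rho i₀ t₀) w) = _
  rw [PhiFun_spec]
  funext j t
  rw [scalAut_apply]
  show _ = iota p k lam rho c (fun x => (if x = ⟨⟨i₀, t₀⟩, hi₀⟩ then ((p+1 : ℕ) : ZMod (p^2)) else 1) * w x) j t
  rw [iota_apply, iota_apply]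
  by_cases h : c + 2 ≤ lam j
  · rw [dif_pos h, dif_pos h]
    by_cases hc : j = i₀ ∧ (t : ℕ) = (t₀ : ℕ)
    · rw [if_pos hc, if_pos ((idx_eq_iff i₀ t₀ hi₀ j t h).mpr hc), nu_smul_natCast]
    · rw [if_neg hc, if_neg (fun hh => hc ((idx_eq_iff i₀ t₀ hi₀ j t h).mp hh)), one_mul]
  · rw [dif_neg h, dif_neg h]
    split <;> simp
end StmtAux

namespace StmtAux

variable {p k : ℕ} {lam rho : Fin k → ℕ} {c : ℕ}

lemma det_Ediag (z : Idx k lam rho c) :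
    LinearMap.det (Ediag p lam rho c z) = ((p+1 : ℕ) : ZMod (p^2)) := by
  classical
  let b := Pi.basisFun (ZMod (p^2)) (Idx k lam rho c)
  rw [← LinearMap.det_toMatrix b]
  have hmat : LinearMap.toMatrix b b (Ediag p lam rho c z) =
      Matrix.diagonal (fun x => if x = z then ((p+1 : ℕ) : ZMod (p^2)) else 1) := by
    ext x y
    rw [LinearMap.toMatrix_apply]
    show (Pi.basisFun (ZMod (p^2)) _).repr _ x = _
    rw [Pi.basisFun_repr]
    show (if x = z then ((p+1 : ℕ) : ZMod (p^2)) else 1) * (b y) x = _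
    rw [Matrix.diagonal_apply]
    have hb : (b y) x = if x = y then 1 else 0 := by
      simp [b, Pi.basisFun_apply, Pi.single_apply]
    rw [hb]
    by_cases hxy : x = y
    · rw [if_pos hxy, if_pos hxy, mul_one]
    · rw [if_neg hxy, if_neg hxy, mul_zero]
  rw [hmat, Matrix.det_diagonal]
  rw [Finset.prod_ite_eq' Finset.univ z (fun _ => ((p+1 : ℕ) : ZMod (p^2)))]
  simp

end StmtAux

namespace StmtAux

variable {p k : ℕ} {lam rho : Fin k → ℕ} {c : ℕ}

lemma pow_p_add_one (p m : ℕ) : (((p+1 : ℕ)) : ZMod (p^2))^m = (m : ZMod (p^2)) * p + 1 := by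
  induction m with
  | zero => simp
  | succ m ih =>
    rw [pow_succ (((p+1 : ℕ)) : ZMod (p^2)) m, ih]
    have hp2' : ((p : ZMod (p^2)))^2 = 0 := by
      rw [← Nat.cast_pow p 2, ZMod.natCast_self]
    push_cast
    ring_nf
    rw [hp2', mul_zero, add_zero]

noncomputable def Fhom (hp : p.Prime) (hsplit : ∀ j, lam j ≤ c ∨ c + 2 ≤ lam j)
    (i₀ : Fin k) (t₀ : Fin (rho i₀)) :
    Additive (Multiplicative (AddAut (abelianPGroupOfPartition p k lam rho))) →+
      abelianPGroupOfPartition p k lam rho :=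
  AddMonoidHom.mk' (fun g => Pi.single i₀ (Pi.single t₀
    (nu p (lam i₀) ((chi (c := c) hp hsplit g.toMul)^(p-1) - 1))))
    (by
      intro g h
      have hkey : (chi (c := c) hp hsplit (Additive.toMul (g + h)))^(p-1) - 1
          = ((chi (c := c) hp hsplit g.toMul)^(p-1) - 1)
            + ((chi (c := c) hp hsplit h.toMul)^(p-1) - 1) := by
        have htm : Additive.toMul (g + h) = Additive.toMul g * Additive.toMul h := rfl
        rw [htm, map_mul, mul_pow]
        set U := (chi (c := c) hp hsplit g.toMul)^(p-1)
        set V := (chi (c := c) hp hsplit h.toMul)^(p-1)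
        have hab : (U - 1) * (V - 1) = 0 := by
          apply mul_eq_zero_of_cast_eq_zero hp
          · exact cast_pow_sub_one hp _ (chi_isUnit hp hsplit g.toMul)
          · exact cast_pow_sub_one hp _ (chi_isUnit hp hsplit h.toMul)
        have : U * V - 1 = (U - 1) * (V - 1) + (U - 1) + (V - 1) := by ring
        rw [this, hab, zero_add]
      rw [hkey, map_add, Pi.single_add, Pi.single_add])

lemma Fhom_scalAut (hp : p.Prime) (hsplit : ∀ j, lam j ≤ c ∨ c + 2 ≤ lam j)
    (i₀ : Fin k) (t₀ : Fin (rho i₀)) (hi₀ : c + 2 ≤ lam i₀) :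
    Fhom hp hsplit i₀ t₀ (Additive.ofMul (Multiplicative.ofAdd (scalAut p lam rho i₀ t₀))) ≠ 0 := by
  intro hzero
  have hval := congrFun (congrFun hzero i₀) t₀
  simp only [Fhom, AddMonoidHom.mk'_apply, toMul_ofMul, Pi.single_eq_same,
    Pi.zero_apply] at hval
  have hchi : chi (c := c) hp hsplit (Multiplicative.ofAdd (scalAut p lam rho i₀ t₀)) = ((p+1 : ℕ) : ZMod (p^2)) := by
    show (LinearMap.det.comp (Phi (c := c) hp hsplit)) _ = _
    rw [MonoidHom.comp_apply]
    show LinearMap.det (Phi (c := c) hp hsplit (Multiplicative.ofAdd (scalAut p lam rho i₀ t₀))) = _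
    rw [Phi_scalAut hp hsplit i₀ t₀ hi₀, det_Ediag]
  rw [hchi] at hval
  rw [pow_p_add_one, add_sub_cancel_right] at hval
  rw [show ((p - 1 : ℕ) : ZMod (p^2)) * (p : ZMod (p^2)) = (((p-1) * p : ℕ) : ZMod (p^2)) by
    push_cast; ring] at hval
  rw [nu_natCast, ← Nat.cast_pow, ← Nat.cast_mul, ZMod.natCast_eq_zero_iff] at hval
  have hptwo : 2 ≤ p := hp.two_le
  have hple : 2 ≤ lam i₀ := by omega
  have : p ∣ (p - 1) := by
    have h1 : p^(lam i₀ - 1) * p ∣ p^(lam i₀ - 1) * (p - 1) := by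
      calc p^(lam i₀ - 1) * p = p^(lam i₀) := by
            rw [← pow_succ, Nat.sub_add_cancel (by omega)]
      _ ∣ (p - 1) * p * p^(lam i₀ - 2) := hval
      _ = p^(lam i₀ - 1) * (p - 1) := by
            rw [mul_assoc, ← pow_succ', show (lam i₀ - 2) + 1 = lam i₀ - 1 by omega]; ring
    exact (mul_dvd_mul_iff_left (pow_ne_zero _ hp.ne_zero)).mp h1
  have := Nat.le_of_dvd (by omega) this
  omega

end StmtAux


open groupCohomology in
/-- For any prime `p` and partition `λ₁ > … > λ_k ≥ 1` with
multiplicities `ρᵢ ≥ 1`: if `λ_i − λ_{i+1} ≥ 2` for some `1 ≤ i ≤ k−1`, or `λ_k ≥ 2`,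
then `H¹(G_λ, A_λ) ≠ 0` for the trivial action of `G_λ = Aut(A_λ)` on `A_λ`. -/
theorem H1_trivial_action_nonzero_of_gap (p k : ℕ) (hp : p.Prime) (hk : 0 < k)
    (lam rho : Fin k → ℕ) (hlam : StrictAnti lam) (hlam1 : ∀ i, 1 ≤ lam i)
    (hrho : ∀ i, 1 ≤ rho i)
    (hgap : (∃ i j : Fin k, (j : ℕ) = (i : ℕ) + 1 ∧ lam j + 2 ≤ lam i) ∨
      2 ≤ lam ⟨k - 1, Nat.sub_lt hk Nat.one_pos⟩) :
    Nontrivial (H1 (Rep.trivial ℤ (Multiplicative (AddAut (abelianPGroupOfPartition p k lam rho)))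
        (abelianPGroupOfPartition p k lam rho))) := by
  classical
  haveI : Fact p.Prime := ⟨hp⟩
  obtain ⟨i₀, c, hi₀, hsplit⟩ :
      ∃ (i₀ : Fin k) (c : ℕ), c + 2 ≤ lam i₀ ∧ ∀ j, lam j ≤ c ∨ c + 2 ≤ lam j := by
    rcases hgap with ⟨i, j, hij, hgap2⟩ | h2
    · have hj1 := hlam1 j
      refine ⟨i, lam i - 2, by omega, ?_⟩
      intro j'
      by_cases hj' : (j' : ℕ) ≤ (i : ℕ)
      · right
        have h4 := hlam.antitone (show j' ≤ i from hj')
        omega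
      · left
        have hj2 : j ≤ j' := by rw [Fin.le_def]; omega
        have h4 := hlam.antitone hj2
        omega
    · refine ⟨⟨k - 1, Nat.sub_lt hk Nat.one_pos⟩, lam ⟨k - 1, Nat.sub_lt hk Nat.one_pos⟩ - 2,
        by omega, fun j' => Or.inr ?_⟩
      have hle : j' ≤ (⟨k - 1, Nat.sub_lt hk Nat.one_pos⟩ : Fin k) := by
        rw [Fin.le_def]
        have := j'.isLt
        simp only []
        omega
      have h4 := hlam.antitone hle
      omega
  have hF := StmtAux.Fhom_scalAut (c := c) hp hsplit i₀ ⟨0, hrho i₀⟩ hi₀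
  have hnt : Nontrivial (Additive (Multiplicative (AddAut (abelianPGroupOfPartition p k lam rho))) →+
      abelianPGroupOfPartition p k lam rho) :=
    ⟨StmtAux.Fhom hp hsplit i₀ ⟨0, hrho i₀⟩, 0, fun h => hF (by rw [h]; rfl)⟩
  have e := groupCohomology.H1IsoOfIsTrivial
    (Rep.trivial ℤ (Multiplicative (AddAut (abelianPGroupOfPartition p k lam rho)))
      (abelianPGroupOfPartition p k lam rho))
  haveI hnt' : Nontrivial (Additive (Multiplicative (AddAut (abelianPGroupOfPartition p k lam rho))) →+
      (Rep.trivial ℤ (Multiplicative (AddAut (abelianPGroupOfPartition p k lam rho)))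
        (abelianPGroupOfPartition p k lam rho))) := hnt
  exact Equiv.nontrivial e.toLinearEquiv.toEquiv
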